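/- arXiv:1312.6752 — 6 statements merged into one kernel-verified Lean document; each statement's English description precedes it below -/
import Mathlib

section
/- Suppose p, q, z ∈ S_θ with p, q ≠ 0 and 0 ≤ θ < π/4, and |z| ≤ C for a constant C > 0. Then 1/|q + 1/(p+z)| ≤ 1/| |q|·e^{iθ} + e^{−iθ}/(|p| + C) |, i.e. |q + 1/(p+z)| ≥ | |q| e^{iθ} + e^{−iθ}/(|p|+C) |. -/
open Real

lemma sector_re_im {θ : ℝ} (hθ0 : 0 ≤ θ) (hθ : θ < π/2) {w : ℂ}
    (hw : w = 0 ∨ |w.arg| ≤ θ) :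
    ‖w‖ * Real.cos θ ≤ w.re ∧ |w.im| ≤ ‖w‖ * Real.sin θ := by
  rcases eq_or_ne w 0 with rfl | hw0
  · simp
  rcases hw with rfl | hw; · simp at hw0
  have hpi : θ ≤ π := by linarith [pi_pos]
  have ha1 : w.arg ≤ θ := (abs_le.mp hw).2
  have ha2 : -θ ≤ w.arg := (abs_le.mp hw).1
  have hcos : Real.cos θ ≤ Real.cos w.arg := by
    rw [← Real.cos_abs w.arg]
    exact Real.cos_le_cos_of_nonneg_of_le_pi (abs_nonneg _) hpi hw
  have hsin : |Real.sin w.arg| ≤ Real.sin θ := by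
    rw [abs_le]
    constructor
    · rw [← Real.sin_neg]
      exact Real.sin_le_sin_of_le_of_le_pi_div_two (by linarith) (by linarith) ha2
    · exact Real.sin_le_sin_of_le_of_le_pi_div_two (by linarith) (le_of_lt hθ) ha1
  have hne : ‖w‖ ≠ 0 := norm_ne_zero_iff.mpr hw0
  have hre : w.re = ‖w‖ * Real.cos w.arg := by
    rw [Complex.cos_arg hw0]; field_simp
  have him : w.im = ‖w‖ * Real.sin w.arg := by
    rw [Complex.sin_arg]; field_simp
  have habs : (0:ℝ) ≤ ‖w‖ := norm_nonneg w
  constructor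
  · rw [hre]; exact mul_le_mul_of_nonneg_left hcos habs
  · rw [him, abs_mul, abs_of_nonneg habs]
    exact mul_le_mul_of_nonneg_left hsin habs

lemma alg_lemma (A c s m B qre qim u v : ℝ) (hA : 0 ≤ A) (hc : 0 < c) (hs : 0 ≤ s)
    (hsc : s ≤ c) (hm : 0 < m) (hB : m ≤ B) (hcs1 : c^2 + s^2 = 1) (hq2 : qre^2 + qim^2 = A^2)
    (huv : u^2 + v^2 = B^2) (hqre : A*c ≤ qre) (hqim : |qim| ≤ A*s)
    (hu : B*c ≤ u) (hv : |v| ≤ B*s) :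
    (A*c + m*c)^2 + (A*s - m*s)^2 ≤ (qre+u)^2 + (qim+v)^2 := by
  have hB0 : 0 < B := lt_of_lt_of_le hm hB
  have h1 : A*c * (B*c) ≤ qre * u :=
    mul_le_mul hqre hu (by positivity) (le_trans (by positivity) hqre)
  have h2 : -(A*s * (B*s)) ≤ qim * v := by
    have habs : |qim * v| ≤ A*s * (B*s) := by
      rw [abs_mul]
      exact mul_le_mul hqim hv (abs_nonneg _) (by positivity)
    have := neg_abs_le (qim * v)
    linarith
  have hc2 : 0 ≤ c^2 - s^2 := by nlinarith
  have hBm : 0 ≤ B - m := by linarith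
  nlinarith [mul_nonneg (mul_nonneg hA hBm) hc2, mul_nonneg hBm (by linarith : (0:ℝ) ≤ B + m)]

set_option maxHeartbeats 1000000 in
theorem key_lemma (θ : ℝ) (hθ0 : 0 ≤ θ) (hθ : θ < π / 4)
    (p q z : ℂ)
    (hp : p = 0 ∨ |p.arg| ≤ θ) (hq : q = 0 ∨ |q.arg| ≤ θ) (hz : z = 0 ∨ |z.arg| ≤ θ)
    (hp0 : p ≠ 0) (hq0 : q ≠ 0)
    (C : ℝ) (hC : 0 < C) (hzC : ‖z‖ ≤ C) :
    ‖((‖q‖ : ℂ) * Complex.exp (θ * Complex.I)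
        + Complex.exp (-θ * Complex.I) / ((‖p‖ + C : ℝ) : ℂ))‖
      ≤ ‖q + 1 / (p + z)‖ := by
  have hπ : 0 < π := pi_pos
  have hθ2 : θ < π/2 := by linarith
  set c := Real.cos θ with hcdef
  set s := Real.sin θ with hsdef
  have hc : 0 < c := Real.cos_pos_of_mem_Ioo ⟨by linarith, hθ2⟩
  have hs : 0 ≤ s := Real.sin_nonneg_of_nonneg_of_le_pi hθ0 (by linarith)
  have hsc : s ≤ c := by
    rw [hcdef, ← Real.sin_pi_div_two_sub]
    exact Real.sin_le_sin_of_le_of_le_pi_div_two (by linarith) (by linarith) (by linarith)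
  have hcs1 : c^2 + s^2 = 1 := by
    rw [hcdef, hsdef]; rw [add_comm]; exact Real.sin_sq_add_cos_sq θ
  obtain ⟨hpre, hpim⟩ := sector_re_im hθ0 hθ2 hp
  obtain ⟨hqre, hqim⟩ := sector_re_im hθ0 hθ2 hq
  obtain ⟨hzre, hzim⟩ := sector_re_im hθ0 hθ2 hz
  set S := p + z with hSdef
  set A := ‖q‖ with hAdef
  set M := ‖p‖ + C with hMdef
  have hpA : 0 < ‖p‖ := norm_pos_iff.mpr hp0
  have hA0 : 0 < A := norm_pos_iff.mpr hq0
  have hM : 0 < M := by positivity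
  have htri : ‖S‖ ≤ ‖p‖ + ‖z‖ := norm_add_le p z
  set r := ‖S‖ with hrdef
  have hSre' : c * (‖p‖ + ‖z‖) ≤ S.re := by
    have : S.re = p.re + z.re := Complex.add_re p z
    rw [this]; rw [mul_add]
    gcongr <;> [linarith [hpre]; linarith [hzre]]
  have hSre : c * r ≤ S.re :=
    le_trans (by nlinarith [norm_nonneg z]) hSre'
  have hSre0 : 0 < S.re := by
    have : 0 < c * ‖p‖ := by positivity
    nlinarith [norm_nonneg z, mul_nonneg hc.le (norm_nonneg z)]
  have hS0 : S ≠ 0 := by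
    intro h; rw [h] at hSre0; simp at hSre0
  have hr : 0 < r := norm_pos_iff.mpr hS0
  have hrM : r ≤ M := by
    have := norm_add_le p z
    rw [hMdef]; linarith
  -- bound on |S.im|
  have hSim1 : c * |S.im| ≤ s * S.re := by
    have h1 : |S.im| ≤ |p.im| + |z.im| := by
      rw [Complex.add_im]; exact abs_add_le _ _
    have h2 : |S.im| ≤ s * (‖p‖ + ‖z‖) := by
      rw [mul_add]; linarith [hpim, hzim]
    calc c * |S.im| ≤ c * (s * (‖p‖ + ‖z‖)) := by
          exact mul_le_mul_of_nonneg_left h2 hc.le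
      _ = s * (c * (‖p‖ + ‖z‖)) := by ring
      _ ≤ s * S.re := mul_le_mul_of_nonneg_left hSre' hs
  have hr2 : r^2 = S.re^2 + S.im^2 := by
    rw [hrdef, Complex.sq_norm, Complex.normSq_apply]; ring
  have hSim : |S.im| ≤ s * r := by
    have h4 : c^2 * S.im^2 ≤ s^2 * S.re^2 := by
      have h := mul_self_le_mul_self (by positivity : (0:ℝ) ≤ c * |S.im|) hSim1
      calc c^2 * S.im^2 = c^2 * (|S.im| * |S.im|) := by rw [abs_mul_abs_self]; ring
        _ = (c * |S.im|) * (c * |S.im|) := by ring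
        _ ≤ (s * S.re) * (s * S.re) := h
        _ = s^2 * S.re^2 := by ring
    have hsq : |S.im|^2 ≤ (s*r)^2 := by
      have h6 : S.im^2 = c^2*S.im^2 + s^2*S.im^2 := by
        calc S.im^2 = (c^2+s^2)*S.im^2 := by rw [hcs1]; ring
          _ = c^2*S.im^2 + s^2*S.im^2 := by ring
      have h7 : (s*r)^2 = s^2*S.re^2 + s^2*S.im^2 := by
        calc (s*r)^2 = s^2*r^2 := by ring
          _ = s^2*S.re^2 + s^2*S.im^2 := by rw [hr2]; ring
      rw [sq_abs, h7]
      linarith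
    exact le_of_pow_le_pow_left₀ two_ne_zero (by positivity) hsq
  -- re/im of 1/S
  set u := (1/S).re with hudef
  set v := (1/S).im with hvdef
  have hnormSq : Complex.normSq S = r^2 := (Complex.sq_norm S).symm
  have hSinv_re : (1/S).re = S.re / r^2 := by rw [one_div, Complex.inv_re, hnormSq]
  have hSinv_im : (1/S).im = -S.im / r^2 := by rw [one_div, Complex.inv_im, hnormSq]
  have hu : (1/r) * c ≤ u := by
    rw [hudef, hSinv_re, show (1/r)*c = c*r/r^2 by field_simp]
    gcongr
  have hv : |v| ≤ (1/r) * s := by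
    rw [hvdef, hSinv_im, abs_div, abs_neg, abs_of_pos (by positivity : (0:ℝ) < r^2),
      show (1/r)*s = s*r/r^2 by field_simp]
    gcongr
  have huv : u^2 + v^2 = (1/r)^2 := by
    rw [hudef, hvdef, hSinv_re, hSinv_im]
    field_simp
    linear_combination (-1) * hr2
  have hq2 : q.re^2 + q.im^2 = A^2 := by
    rw [hAdef, Complex.sq_norm, Complex.normSq_apply]; ring
  have hBm : 1/M ≤ 1/r := one_div_le_one_div_of_le hr hrM
  have key := alg_lemma A c s (1/M) (1/r) q.re q.im u v hA0.le hc hs hsc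
    (by positivity) hBm hcs1 hq2 huv hqre hqim hu hv
  -- rewrite both sides
  have e1 : Complex.exp (θ * Complex.I) = (c:ℂ) + (s:ℂ) * Complex.I := by
    rw [Complex.exp_mul_I, ← Complex.ofReal_cos, ← Complex.ofReal_sin]
  have e2 : Complex.exp (-θ * Complex.I) = (c:ℂ) - (s:ℂ) * Complex.I := by
    rw [show (-θ : ℂ) * Complex.I = ((-θ : ℝ) : ℂ) * Complex.I by push_cast; ring,
      Complex.exp_mul_I, hcdef, hsdef,
      show Complex.cos (((-θ:ℝ)):ℂ) = ((Real.cos (-θ) : ℝ):ℂ) from (Complex.ofReal_cos _).symm,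
      show Complex.sin (((-θ:ℝ)):ℂ) = ((Real.sin (-θ) : ℝ):ℂ) from (Complex.ofReal_sin _).symm,
      Real.cos_neg, Real.sin_neg]
    push_cast; ring
  have hMne : (M:ℂ) ≠ 0 := by exact_mod_cast hM.ne'
  have hR : (A : ℂ) * Complex.exp (θ * Complex.I) + Complex.exp (-θ * Complex.I) / (M:ℂ)
      = ((A*c + (1/M)*c : ℝ):ℂ) + ((A*s - (1/M)*s : ℝ):ℂ) * Complex.I := by
    rw [e1, e2]; push_cast; field_simp; ring
  rw [hR]
  have hL : q + 1/S = ((q.re + u : ℝ):ℂ) + ((q.im + v : ℝ):ℂ) * Complex.I := by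
    rw [hudef, hvdef]
    push_cast
    rw [Complex.ext_iff]
    simp
  rw [hL, Complex.norm_def, Complex.norm_def, Complex.normSq_add_mul_I, Complex.normSq_add_mul_I]
  apply Real.sqrt_le_sqrt
  exact key
end

section
/- Suppose p, q, z ∈ S_θ with p, q ≠ 0, 0 ≤ θ < π/4, and C is a positive constant with C² ≥ |p|/(|q| cos 2θ). If |z| ≤ C then the inequality |q + 1/(p+z)| ≥ cos(2θ)|q| + 1/(|p| + C) holds. -/
open Real

/-- Sector membership gives bounds on real and imaginary parts. -/
lemma sector_re_im_s6 (θ : ℝ) (hθ0 : 0 ≤ θ) (hθ2 : θ < π / 2) (a : ℂ)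
    (ha : a = 0 ∨ |a.arg| ≤ θ) :
    0 ≤ a.re ∧ Real.cos θ * |a.im| ≤ Real.sin θ * a.re := by
  by_cases h0 : a = 0
  · simp [h0]
  · rcases ha with h | h
    · exact absurd h h0
    have habs : 0 < ‖a‖ := norm_pos_iff.mpr h0
    have hre : a.re = ‖a‖ * Real.cos a.arg := by
      rw [Complex.cos_arg h0]; field_simp
    have him : a.im = ‖a‖ * Real.sin a.arg := by
      rw [Complex.sin_arg a]; field_simp
    have harg1 : -(π/2) ≤ a.arg := by
      have := abs_le.mp h; linarith [this.1]
    have harg2 : a.arg ≤ π/2 := by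
      have := abs_le.mp h; linarith [this.2]
    have hcos : 0 ≤ Real.cos a.arg :=
      Real.cos_nonneg_of_mem_Icc ⟨harg1, harg2⟩
    constructor
    · rw [hre]; positivity
    · -- key : cos θ * |sin (arg a)| ≤ sin θ * cos (arg a)
      have hx0 : 0 ≤ |a.arg| := abs_nonneg _
      have hxθ : |a.arg| ≤ θ := h
      have hsin : |Real.sin a.arg| = Real.sin |a.arg| := by
        rcases abs_cases a.arg with ⟨h1, h2⟩ | ⟨h1, h2⟩
        · rw [h1, abs_of_nonneg (Real.sin_nonneg_of_nonneg_of_le_pi h2 (by linarith [Real.pi_pos]))]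
        · rw [h1, Real.sin_neg]
          rw [abs_of_nonpos]
          apply Real.sin_nonpos_of_nonpos_of_neg_pi_le (by linarith) (by linarith [Real.pi_pos])
    -- sin(|arg| - θ) ≤ 0
      have hkey : Real.sin |a.arg| * Real.cos θ - Real.cos |a.arg| * Real.sin θ ≤ 0 := by
        have := Real.sin_sub |a.arg| θ
        rw [← this]
        exact Real.sin_nonpos_of_nonpos_of_neg_pi_le (by linarith) (by linarith [Real.pi_pos])
      have hcosabs : Real.cos |a.arg| = Real.cos a.arg := Real.cos_abs _
      have : Real.cos θ * |Real.sin a.arg| ≤ Real.sin θ * Real.cos a.arg := by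
        rw [hsin]
        rw [hcosabs] at hkey
        linarith
      rw [him, hre, abs_mul, abs_of_nonneg habs.le]
      calc Real.cos θ * (‖a‖ * |Real.sin a.arg|)
          = ‖a‖ * (Real.cos θ * |Real.sin a.arg|) := by ring
        _ ≤ ‖a‖ * (Real.sin θ * Real.cos a.arg) := by
            exact mul_le_mul_of_nonneg_left this habs.le
        _ = Real.sin θ * (‖a‖ * Real.cos a.arg) := by ring

set_option maxHeartbeats 1000000 in
theorem denominator_lower_bound (θ : ℝ) (hθ0 : 0 ≤ θ) (hθ : θ < π / 4)
    (p q z : ℂ)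
    (hp : p = 0 ∨ |p.arg| ≤ θ) (hq : q = 0 ∨ |q.arg| ≤ θ) (hz : z = 0 ∨ |z.arg| ≤ θ)
    (hp0 : p ≠ 0) (hq0 : q ≠ 0)
    (C : ℝ) (hC : 0 < C)
    (hC2 : ‖p‖ / (‖q‖ * Real.cos (2 * θ)) ≤ C ^ 2)
    (hzC : ‖z‖ ≤ C) :
    Real.cos (2 * θ) * ‖q‖ + 1 / (‖p‖ + C)
      ≤ ‖q + 1 / (p + z)‖ := by
  have hpi : 0 < π := Real.pi_pos
  have hθ2 : θ < π / 2 := by linarith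
  have hc : 0 < (Real.cos θ) := Real.cos_pos_of_mem_Ioo ⟨by linarith, hθ2⟩
  have hs : 0 ≤ (Real.sin θ) := Real.sin_nonneg_of_nonneg_of_le_pi hθ0 (by linarith)
  have hsc : (Real.sin θ) < (Real.cos θ) := by
    have h1 : (Real.cos θ) = Real.sin (π/2 - θ) := (Real.sin_pi_div_two_sub θ).symm
    rw [h1]
    exact Real.strictMonoOn_sin ⟨by linarith, by linarith⟩
      ⟨by linarith, by linarith⟩ (by linarith)
  have hpyth : (Real.sin θ)^2 + (Real.cos θ)^2 = 1 := Real.sin_sq_add_cos_sq θ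
  have hcos2 : Real.cos (2 * θ) = (Real.cos θ)^2 - (Real.sin θ)^2 := by
    rw [Real.cos_two_mul]; nlinarith
  have hcos2nn : 0 ≤ (Real.cos θ)^2 - (Real.sin θ)^2 := by nlinarith
  -- sector facts
  obtain ⟨hpre, hpim⟩ := sector_re_im_s6 θ hθ0 hθ2 p hp
  obtain ⟨hqre, hqim⟩ := sector_re_im_s6 θ hθ0 hθ2 q hq
  obtain ⟨hzre, hzim⟩ := sector_re_im_s6 θ hθ0 hθ2 z hz
  -- re q ≥ (Real.cos θ) |q|, using |q|² = re² + im²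
  have habs_re : ∀ a : ℂ, 0 ≤ a.re → (Real.cos θ) * |a.im| ≤ (Real.sin θ) * a.re →
      (Real.cos θ) * ‖a‖ ≤ a.re := by
    intro a h1 h2
    have hsq : (‖a‖)^2 = a.re^2 + a.im^2 := by
      rw [Complex.sq_norm, Complex.normSq_apply]; ring
    have him2 : a.im^2 = |a.im|^2 := (sq_abs _).symm
    have h3 : (Real.cos θ)^2 * a.im^2 ≤ (Real.sin θ)^2 * a.re^2 := by
      nlinarith [abs_nonneg a.im, mul_nonneg hc.le (abs_nonneg a.im), mul_nonneg hs h1]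
    have h4 : ((Real.cos θ) * ‖a‖)^2 ≤ a.re^2 := by nlinarith
    exact le_of_pow_le_pow_left₀ two_ne_zero h1 h4
  have hqre' : (Real.cos θ) * ‖q‖ ≤ q.re := habs_re q hqre hqim
  -- p.re > 0
  have hpabs : 0 < ‖p‖ := norm_pos_iff.mpr hp0
  have hppos : 0 < p.re := by
    have := habs_re p hpre hpim
    nlinarith
  -- s := p + z
  obtain ⟨s, hsdef⟩ : ∃ s, s = p + z := ⟨_, rfl⟩
  have hsre : 0 < s.re := by
    have : s.re = p.re + z.re := by rw [hsdef, Complex.add_re]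
    linarith
  have hsim : (Real.cos θ) * |s.im| ≤ (Real.sin θ) * s.re := by
    have h1 : s.im = p.im + z.im := by rw [hsdef, Complex.add_im]
    have h2 : s.re = p.re + z.re := by rw [hsdef, Complex.add_re]
    have h3 : (Real.cos θ) * |p.im + z.im| ≤ (Real.cos θ) * (|p.im| + |z.im|) :=
      mul_le_mul_of_nonneg_left (abs_add_le _ _) hc.le
    rw [h1, h2]
    calc (Real.cos θ) * |p.im + z.im| ≤ (Real.cos θ) * (|p.im| + |z.im|) := h3
      _ = (Real.cos θ) * |p.im| + (Real.cos θ) * |z.im| := by ring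
      _ ≤ (Real.sin θ) * p.re + (Real.sin θ) * z.re := add_le_add hpim hzim
      _ = (Real.sin θ) * (p.re + z.re) := by ring
  have hs0 : s ≠ 0 := fun h => by rw [h] at hsre; simp at hsre
  have hsabs : 0 < ‖s‖ := norm_pos_iff.mpr hs0
  have hsre' : (Real.cos θ) * ‖s‖ ≤ s.re := habs_re s hsre.le hsim
  -- w := s⁻¹
  obtain ⟨w, hwdef⟩ : ∃ w, w = s⁻¹ := ⟨_, rfl⟩
  have hnormSq : Complex.normSq s = (‖s‖)^2 := (Complex.sq_norm s).symm
  have hnsq : 0 < Complex.normSq s := by rw [hnormSq]; positivity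
  have hwre : w.re = s.re / Complex.normSq s := by rw [hwdef, Complex.inv_re]
  have hwim : w.im = -s.im / Complex.normSq s := by rw [hwdef, Complex.inv_im]
  have hwabs : ‖w‖ = (‖s‖)⁻¹ := by rw [hwdef, norm_inv]
  have hwabspos : 0 < ‖w‖ := by rw [hwabs]; exact inv_pos.mpr hsabs
  have hwre0 : 0 ≤ w.re := by rw [hwre]; positivity
  have hwimb : (Real.cos θ) * |w.im| ≤ (Real.sin θ) * w.re := by
    rw [hwre, hwim, abs_div, abs_neg, abs_of_pos hnsq, mul_div_assoc', mul_div_assoc']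
    gcongr
  have hwre' : (Real.cos θ) * ‖w‖ ≤ w.re := habs_re w hwre0 hwimb
  -- lower bound for |w|
  have hsle : ‖s‖ ≤ ‖p‖ + C := by
    calc ‖s‖ ≤ ‖p‖ + ‖z‖ := by
          rw [hsdef]; exact norm_add_le p z
      _ ≤ ‖p‖ + C := by linarith
  have hpC : 0 < ‖p‖ + C := by positivity
  have hwlb : 1 / (‖p‖ + C) ≤ ‖w‖ := by
    rw [hwabs, one_div]
    exact inv_anti₀ hsabs hsle
  -- key inner product bound
  have hinner : ((Real.cos θ)^2 - (Real.sin θ)^2) * (‖q‖ * ‖w‖)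
      ≤ q.re * w.re + q.im * w.im := by
    have t3 : -( |q.im| * |w.im| ) ≤ q.im * w.im := by
      rw [← abs_mul]; exact neg_abs_le _
    have t1 : ((Real.cos θ) * |q.im|) * ((Real.cos θ) * |w.im|) ≤ ((Real.sin θ) * q.re) * ((Real.sin θ) * w.re) :=
      mul_le_mul hqim hwimb (by positivity) (mul_nonneg hs hqre)
    have t2 : ((Real.cos θ) * ‖q‖) * ((Real.cos θ) * ‖w‖) ≤ q.re * w.re :=
      mul_le_mul hqre' hwre' (mul_nonneg hc.le (norm_nonneg w)) hqre
    have t3' : (Real.cos θ)^2 * -(|q.im| * |w.im|) ≤ (Real.cos θ)^2 * (q.im * w.im) :=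
      mul_le_mul_of_nonneg_left t3 (sq_nonneg (Real.cos θ))
    have u1 : ((Real.cos θ)^2 - (Real.sin θ)^2) * (((Real.cos θ) * ‖q‖) * ((Real.cos θ) * ‖w‖))
        ≤ ((Real.cos θ)^2 - (Real.sin θ)^2) * (q.re * w.re) := mul_le_mul_of_nonneg_left t2 hcos2nn
    have u2 : ((Real.cos θ)^2 - (Real.sin θ)^2) * (q.re * w.re) ≤ (Real.cos θ)^2 * (q.re * w.re + q.im * w.im) := by
      nlinarith [t1, t3']
    have u3 : (Real.cos θ)^2 * (((Real.cos θ)^2 - (Real.sin θ)^2) * (‖q‖ * ‖w‖))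
        ≤ (Real.cos θ)^2 * (q.re * w.re + q.im * w.im) := by nlinarith [u1, u2]
    exact le_of_mul_le_mul_left u3 (by positivity)
  -- |q + w| * |w| ≥ re((q+w) * conj w)
  have hre_le : (q + w).re * w.re + (q + w).im * w.im
      ≤ ‖q + w‖ * ‖w‖ := by
    have h1 : ((q + w) * (starRingEnd ℂ) w).re
        = (q + w).re * w.re + (q + w).im * w.im := by
      simp [Complex.mul_re, Complex.conj_re, Complex.conj_im]
    calc (q + w).re * w.re + (q + w).im * w.im
        = ((q + w) * (starRingEnd ℂ) w).re := h1.symm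
      _ ≤ ‖(q + w) * (starRingEnd ℂ) w‖ := Complex.re_le_norm _
      _ = ‖q + w‖ * ‖w‖ := by
          rw [norm_mul, Complex.norm_conj]
  have hwsq : w.re * w.re + w.im * w.im = (‖w‖)^2 := by
    rw [← Complex.normSq_apply, Complex.sq_norm]
  have hmain : (((Real.cos θ)^2 - (Real.sin θ)^2) * ‖q‖ + ‖w‖) * ‖w‖
      ≤ ‖q + w‖ * ‖w‖ := by
    have h2 : (q + w).re = q.re + w.re := Complex.add_re q w
    have h3 : (q + w).im = q.im + w.im := Complex.add_im q w
    rw [h2, h3] at hre_le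
    nlinarith
  have hfinal : ((Real.cos θ)^2 - (Real.sin θ)^2) * ‖q‖ + ‖w‖
      ≤ ‖q + w‖ :=
    le_of_mul_le_mul_right hmain hwabspos
  have hgoal : ‖q + 1 / (p + z)‖ = ‖q + w‖ := by
    rw [hwdef, hsdef, one_div]
  rw [hgoal, hcos2]
  have hqabs : 0 ≤ ‖q‖ := norm_nonneg q
  linarith
end

section
/- Let 0 ≤ θ < π/4 and let q_1,…,q_n, p_1,…,p_n ∈ S_θ be nonzero, z ∈ S_θ. Suppose C > 0 satisfies C² ≥ (sup_{1≤k≤n} |p_k/q_k|)/cos(2θ). If |z| ≤ C then the finite continued fraction 1/(q_1 + 1/(p_1 + 1/(q_2 + ··· + 1/(q_n + 1/(p_n + z))···))) has modulus at most C. -/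
open Real

/-- The finite continued fraction `F_0 = z`,
`F_k = 1/(q_{n-k+1} + 1/(p_{n-k+1} + F_{k-1}))`, so that `F_n` is
`1/(q_1 + 1/(p_1 + 1/(q_2 + ⋯ + 1/(q_n + 1/(p_n + z))⋯)))`. -/
noncomputable def contFrac (n : ℕ) (q p : ℕ → ℂ) (z : ℂ) : ℕ → ℂ :=
  Nat.rec z (fun k F => 1 / (q (n - k) + 1 / (p (n - k) + F)))

lemma sector_re_ge {θ : ℝ} (hθ : θ < π/2) {w : ℂ} (hw : w ≠ 0)
    (h : |w.arg| ≤ θ) : ‖w‖ * Real.cos θ ≤ w.re := by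
  have hπ : θ ≤ π := by linarith [pi_pos]
  have h1 : Real.cos θ ≤ Real.cos |w.arg| :=
    Real.cos_le_cos_of_nonneg_of_le_pi (abs_nonneg _) hπ h
  rw [Real.cos_abs] at h1
  have h2 := Complex.cos_arg hw
  have h3 : 0 < ‖w‖ := norm_pos_iff.mpr hw
  rw [h2, le_div_iff₀ h3] at h1
  linarith [h1, mul_comm (Real.cos θ) (‖w‖)]

lemma sector_of_re_ge {θ : ℝ} (hθ0 : 0 ≤ θ) {w : ℂ} (hw : w ≠ 0)
    (h : ‖w‖ * Real.cos θ ≤ w.re) : |w.arg| ≤ θ := by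
  by_contra hc
  push_neg at hc
  have h1 : Real.cos |w.arg| < Real.cos θ :=
    Real.cos_lt_cos_of_nonneg_of_le_pi hθ0 (Complex.abs_arg_le_pi w) hc
  rw [Real.cos_abs] at h1
  have h2 := Complex.cos_arg hw
  have h3 : 0 < ‖w‖ := norm_pos_iff.mpr hw
  rw [h2] at h1
  have : w.re < ‖w‖ * Real.cos θ := by
    calc w.re = ‖w‖ * (w.re / ‖w‖) := by field_simp
    _ < ‖w‖ * Real.cos θ := by exact mul_lt_mul_of_pos_left h1 h3
  linarith

lemma sector_add {θ : ℝ} (hθ0 : 0 ≤ θ) (hθ : θ < π/2) {w₁ w₂ : ℂ}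
    (h1 : w₁ ≠ 0) (ha1 : |w₁.arg| ≤ θ) (h2 : w₂ ≠ 0) (ha2 : |w₂.arg| ≤ θ) :
    w₁ + w₂ ≠ 0 ∧ |(w₁ + w₂).arg| ≤ θ := by
  have hcos : 0 < Real.cos θ := Real.cos_pos_of_mem_Ioo ⟨by linarith [pi_pos], hθ⟩
  have r1 := sector_re_ge hθ h1 ha1
  have r2 := sector_re_ge hθ h2 ha2
  have hp1 : 0 < ‖w₁‖ := norm_pos_iff.mpr h1
  have hp2 : 0 < ‖w₂‖ := norm_pos_iff.mpr h2
  have hre : 0 < (w₁ + w₂).re := by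
    have : (w₁ + w₂).re = w₁.re + w₂.re := Complex.add_re _ _
    nlinarith
  have hne : w₁ + w₂ ≠ 0 := fun hz => by simp [hz] at hre
  refine ⟨hne, sector_of_re_ge hθ0 hne ?_⟩
  have htri : ‖w₁ + w₂‖ ≤ ‖w₁‖ + ‖w₂‖ :=
    norm_add_le _ _
  have : (w₁ + w₂).re = w₁.re + w₂.re := Complex.add_re _ _
  nlinarith

lemma sector_inv {θ : ℝ} (hθ : θ < π) {w : ℂ} (hw : w ≠ 0) (h : |w.arg| ≤ θ) :
    |w⁻¹.arg| ≤ θ := by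
  rw [Complex.arg_inv]
  have : w.arg ≠ π := by
    intro he
    rw [he] at h
    rw [abs_of_pos pi_pos] at h
    linarith
  simp [this, h, abs_neg]

lemma sector_dot {θ : ℝ} (hθ0 : 0 ≤ θ) (hθ : θ < π/2) {q u : ℂ}
    (hq : q ≠ 0) (haq : |q.arg| ≤ θ) (hu : u ≠ 0) (hau : |u.arg| ≤ θ) :
    ‖q‖ * ‖u‖ * Real.cos (2*θ) ≤ (q * (starRingEnd ℂ) u).re := by
  have hpq : 0 < ‖q‖ := norm_pos_iff.mpr hq
  have hpu : 0 < ‖u‖ := norm_pos_iff.mpr hu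
  have e1 : (q * (starRingEnd ℂ) u).re = q.re * u.re + q.im * u.im := by
    simp [Complex.mul_re]
  have cq := Complex.cos_arg hq
  have cu := Complex.cos_arg hu
  have sq := Complex.sin_arg q
  have su := Complex.sin_arg u
  have e2 : (q * (starRingEnd ℂ) u).re
      = ‖q‖ * ‖u‖ * Real.cos (q.arg - u.arg) := by
    rw [e1, Real.cos_sub]
    have hq' : q.re = ‖q‖ * Real.cos q.arg := by rw [cq]; field_simp
    have hu' : u.re = ‖u‖ * Real.cos u.arg := by rw [cu]; field_simp
    have hq'' : q.im = ‖q‖ * Real.sin q.arg := by rw [sq]; field_simp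
    have hu'' : u.im = ‖u‖ * Real.sin u.arg := by rw [su]; field_simp
    rw [hq', hu', hq'', hu'']; ring
  rw [e2]
  have habs : |q.arg - u.arg| ≤ 2*θ := by
    have := abs_sub (q.arg) (u.arg)
    calc |q.arg - u.arg| ≤ |q.arg| + |u.arg| := abs_sub _ _
    _ ≤ 2*θ := by linarith
  have : Real.cos (2*θ) ≤ Real.cos |q.arg - u.arg| :=
    Real.cos_le_cos_of_nonneg_of_le_pi (abs_nonneg _) (by linarith [pi_pos]) habs
  rw [Real.cos_abs] at this
  have := mul_le_mul_of_nonneg_left this (by positivity : (0:ℝ) ≤ ‖q‖ * ‖u‖)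
  linarith

lemma key_ineq {a b c C P : ℝ} (ha : 0 < a) (hb : 0 < b) (hC : 0 < C)
    (hc : 0 < c) (hc1 : c ≤ 1) (hP : 0 ≤ P) (hPa : P ≤ C^2*c*a)
    (hbP : 1 ≤ b*(P+C)) : 1 ≤ C^2*(a^2+b^2+2*a*b*c) := by
  set x := C*a*c with hx
  have hx0 : 0 < x := by positivity
  set t := C*b*(1+x) with ht
  have ht1 : 1 ≤ t := by
    calc 1 ≤ b*(P+C) := hbP
    _ ≤ b*(C^2*c*a + C) := by nlinarith
    _ = t := by rw [ht, hx]; ring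
  have hca : x^2 ≤ C^2*a^2 := by
    have he2 : x^2 = C^2*a^2*c^2 := by rw [hx]; ring
    have hc2 : c^2 ≤ 1 := by nlinarith
    nlinarith [mul_le_mul_of_nonneg_left hc2 (by positivity : (0:ℝ) ≤ C^2*a^2)]
  have hmain : (1+x)^2 ≤ C^2*(a^2+b^2+2*a*b*c)*(1+x)^2 := by
    have he : C^2*(a^2+b^2+2*a*b*c)*(1+x)^2
        = C^2*a^2*(1+x)^2 + t^2 + 2*x*t*(1+x) := by rw [ht, hx]; ring
    rw [he]
    nlinarith [sq_nonneg (t-1), mul_nonneg hx0.le (sub_nonneg.2 ht1), sq_nonneg x,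
      mul_nonneg (mul_nonneg hx0.le hx0.le) (sub_nonneg.2 ht1),
      mul_le_mul_of_nonneg_right hca (sq_nonneg (1+x)), sq_nonneg (x*(1+x))]
  have h1x : 0 < (1+x)^2 := by positivity
  nlinarith

lemma step_lemma {θ C : ℝ} (hθ0 : 0 ≤ θ) (hθ : θ < π/4) (hC : 0 < C)
    {p q w : ℂ} (hq0 : q ≠ 0) (hqa : |q.arg| ≤ θ)
    (hp0 : p ≠ 0) (hpa : |p.arg| ≤ θ)
    (hw : w = 0 ∨ |w.arg| ≤ θ) (hwC : ‖w‖ ≤ C)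
    (hpq : ‖p‖ ≤ C^2 * Real.cos (2*θ) * ‖q‖) :
    (1/(q + 1/(p+w)) = 0 ∨ |(1/(q + 1/(p+w))).arg| ≤ θ) ∧
      ‖1/(q + 1/(p+w))‖ ≤ C := by
  have hπ : (0:ℝ) < π := pi_pos
  have hπ2 : θ < π/2 := by linarith
  have hcc : 0 < Real.cos (2*θ) := Real.cos_pos_of_mem_Ioo ⟨by linarith, by linarith⟩
  -- p + w in sector, nonzero
  have hpw : p + w ≠ 0 ∧ |(p+w).arg| ≤ θ := by
    rcases eq_or_ne w 0 with h0 | hne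
    · simpa [h0] using And.intro hp0 hpa
    · rcases hw with h0 | ha
      · exact absurd h0 hne
      · exact sector_add hθ0 hπ2 hp0 hpa hne ha
  set u := (p+w)⁻¹ with hu
  have hu0 : u ≠ 0 := inv_ne_zero hpw.1
  have hua : |u.arg| ≤ θ := sector_inv (by linarith) hpw.1 hpw.2
  have habs_pw : ‖p+w‖ ≤ ‖p‖ + C :=
    le_trans (norm_add_le _ _) (by linarith)
  have habs_pw0 : 0 < ‖p+w‖ := norm_pos_iff.mpr hpw.1
  have hbu : 1 ≤ ‖u‖ * (‖p‖ + C) := by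
    have : ‖u‖ = (‖p+w‖)⁻¹ := by rw [hu, norm_inv]
    rw [this]
    rw [inv_mul_eq_div, le_div_iff₀ habs_pw0]
    linarith
  -- q + u in sector, nonzero
  have hqu : q + u ≠ 0 ∧ |(q+u).arg| ≤ θ := sector_add hθ0 hπ2 hq0 hqa hu0 hua
  -- norm lower bound
  have hdot := sector_dot hθ0 hπ2 hq0 hqa hu0 hua
  have hnormSq : ‖q+u‖^2
      = ‖q‖^2 + ‖u‖^2 + 2*(q * (starRingEnd ℂ) u).re := by
    rw [Complex.sq_norm, Complex.sq_norm, Complex.sq_norm, Complex.normSq_add]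
  have hkey : 1 ≤ C^2 * (‖q‖^2 + ‖u‖^2
      + 2 * ‖q‖ * ‖u‖ * Real.cos (2*θ)) := by
    have haq : 0 < ‖q‖ := norm_pos_iff.mpr hq0
    have hau : 0 < ‖u‖ := norm_pos_iff.mpr hu0
    have := key_ineq haq hau hC hcc (Real.cos_le_one _) (norm_nonneg p)
      (by linarith [hpq] : ‖p‖ ≤ C^2 * Real.cos (2*θ) * ‖q‖)
      (by linarith [hbu])
    linarith [this]
  have hlow : 1/C ≤ ‖q+u‖ := by
    have h2 : (1/C)^2 ≤ ‖q+u‖^2 := by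
      rw [hnormSq]
      have : 1/C^2 ≤ ‖q‖^2 + ‖u‖^2
          + 2 * ‖q‖ * ‖u‖ * Real.cos (2*θ) := by
        rw [div_le_iff₀ (by positivity)] at *
        nlinarith [hkey]
      calc (1/C)^2 = 1/C^2 := by ring
      _ ≤ _ := le_trans this (by linarith [hdot])
    have h1C : (0:ℝ) ≤ 1/C := by positivity
    nlinarith [norm_nonneg (q+u)]
  have hrw : 1/(p+w) = u := by rw [one_div, hu]
  rw [hrw]
  constructor
  · right
    rw [one_div]
    exact sector_inv (by linarith) hqu.1 hqu.2
  · rw [one_div, norm_inv]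
    rw [inv_le_comm₀ (norm_pos_iff.mpr hqu.1) hC]
    calc C⁻¹ = 1/C := (one_div C).symm
    _ ≤ _ := hlow

theorem value_region_origin_circle (θ : ℝ) (hθ0 : 0 ≤ θ) (hθ : θ < π / 4)
    (n : ℕ) (q p : ℕ → ℂ) (z : ℂ)
    (hq : ∀ k, 1 ≤ k → k ≤ n → q k ≠ 0 ∧ |(q k).arg| ≤ θ)
    (hp : ∀ k, 1 ≤ k → k ≤ n → p k ≠ 0 ∧ |(p k).arg| ≤ θ)
    (hz : z = 0 ∨ |z.arg| ≤ θ)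
    (C : ℝ) (hC : 0 < C)
    (hC2 : ∀ k, 1 ≤ k → k ≤ n → ‖p k / q k‖ / Real.cos (2 * θ) ≤ C ^ 2)
    (hzC : ‖z‖ ≤ C) :
    ‖contFrac n q p z n‖ ≤ C := by
  have hπ : (0:ℝ) < π := pi_pos
  have hcc : 0 < Real.cos (2*θ) := Real.cos_pos_of_mem_Ioo ⟨by linarith, by linarith⟩
  suffices h : ∀ k, k ≤ n → (contFrac n q p z k = 0 ∨ |(contFrac n q p z k).arg| ≤ θ) ∧
      ‖contFrac n q p z k‖ ≤ C from (h n le_rfl).2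
  intro k
  induction k with
  | zero => intro _; exact ⟨hz, hzC⟩
  | succ k ih =>
    intro hk
    have hk' : k ≤ n := by omega
    obtain ⟨ihS, ihC⟩ := ih hk'
    have hj1 : 1 ≤ n - k := by omega
    have hj2 : n - k ≤ n := by omega
    obtain ⟨hq0, hqa⟩ := hq _ hj1 hj2
    obtain ⟨hp0, hpa⟩ := hp _ hj1 hj2
    have hpq : ‖p (n-k)‖ ≤ C^2 * Real.cos (2*θ) * ‖q (n-k)‖ := by
      have h1 := hC2 _ hj1 hj2
      rw [norm_div, div_div, div_le_iff₀
        (mul_pos (norm_pos_iff.mpr hq0) hcc)] at h1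
      calc ‖p (n-k)‖ ≤ C^2 * (‖q (n-k)‖ * Real.cos (2*θ)) := h1
      _ = _ := by ring
    have heq : contFrac n q p z (k+1)
        = 1/(q (n-k) + 1/(p (n-k) + contFrac n q p z k)) := rfl
    rw [heq]
    exact step_lemma hθ0 hθ hC hq0 hqa hp0 hpa ihS ihC hpq
end

section
/- Let p = q = t e^{iπ/4} and z = t^{−1/3} e^{iπ/4} with 0 < t ≤ 1/2. Then |q + 1/(p+z)|² < t^{2/3} = 1/|z|², so 1/|q + 1/(p+z)| > |z|. -/
open Real

theorem counterexample_at_pi_div_four (t : ℝ) (ht0 : 0 < t) (ht : t ≤ 1 / 2) :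
    let p : ℂ := (t : ℂ) * Complex.exp ((π / 4 : ℝ) * Complex.I)
    let q : ℂ := (t : ℂ) * Complex.exp ((π / 4 : ℝ) * Complex.I)
    let z : ℂ := ((t ^ (-(1 / 3) : ℝ) : ℝ) : ℂ) * Complex.exp ((π / 4 : ℝ) * Complex.I)
    ‖q + 1 / (p + z)‖ ^ 2 < t ^ ((2 : ℝ) / 3) ∧
      t ^ ((2 : ℝ) / 3) = 1 / ‖z‖ ^ 2 ∧
      ‖z‖ < 1 / ‖q + 1 / (p + z)‖ := by
  intro p q z
  set b : ℝ := t ^ ((1:ℝ)/3) with hbdef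
  have hb : (0:ℝ) < b := Real.rpow_pos_of_pos ht0 _
  have hb3 : b ^ 3 = t := by
    rw [hbdef, ← Real.rpow_natCast (t ^ ((1:ℝ)/3)) 3, ← Real.rpow_mul ht0.le]
    norm_num
  have ha : t ^ (-(1/3) : ℝ) = 1 / b := by
    rw [Real.rpow_neg ht0.le, hbdef, one_div]
    norm_num
  have h23 : t ^ ((2:ℝ)/3) = b ^ 2 := by
    rw [hbdef, ← Real.rpow_natCast (t ^ ((1:ℝ)/3)) 2, ← Real.rpow_mul ht0.le]
    norm_num
  set c : ℝ := Real.sqrt 2 / 2 with hcdef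
  have hc2 : c ^ 2 = 1 / 2 := by
    rw [hcdef, div_pow, Real.sq_sqrt (by norm_num : (0:ℝ) ≤ 2)]
    norm_num
  have hcpos : 0 < c := by positivity
  have hE : Complex.exp ((π / 4 : ℝ) * Complex.I)
      = ((c : ℝ) : ℂ) * (1 + Complex.I) := by
    rw [Complex.exp_mul_I, ← Complex.ofReal_cos, ← Complex.ofReal_sin,
      Real.cos_pi_div_four, Real.sin_pi_div_four, hcdef]
    push_cast
    ring
  set d : ℝ := (t + 1/b) * c with hddef
  have hdpos : 0 < d := by
    apply mul_pos _ hcpos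
    positivity
  have hIinv : (1 + Complex.I)⁻¹ = (1 - Complex.I) / 2 := by
    rw [inv_eq_one_div, div_eq_div_iff (by simp [Complex.ext_iff]) (by norm_num)]
    linear_combination Complex.I_sq
  have hpz : p + z = (d:ℂ) * (1 + Complex.I) := by
    simp only [p, z, hE, ha, hddef]
    push_cast
    ring
  have hw : q + 1/(p+z)
      = ((t*c + 1/(2*d) : ℝ):ℂ) + ((t*c - 1/(2*d) : ℝ):ℂ) * Complex.I := by
    rw [hpz, one_div, mul_inv, hIinv]
    simp only [q, hE]
    push_cast
    ring
  have habs2 : ‖q + 1/(p+z)‖ ^ 2 = t^2 + 1/(t+1/b)^2 := by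
    rw [hw, Complex.sq_norm, Complex.normSq_add_mul_I]
    have h2d : 2 * d ^ 2 = (t + 1/b)^2 := by
      rw [hddef, mul_pow, hc2]; ring
    have hstep : (t*c + 1/(2*d))^2 + (t*c - 1/(2*d))^2 = t^2*(2*c^2) + 1/(2*d^2) := by
      have hd' : d ≠ 0 := hdpos.ne'
      field_simp
      ring
    rw [hstep, hc2, ← h2d]
    norm_num
  -- key real inequality
  have hb1 : b < 1 := by
    nlinarith [hb3, hb, sq_nonneg (b-1), sq_nonneg (b+1)]
  have hb4 : b ^ 4 < 1/2 := by nlinarith [hb3, hb]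
  have hkey : t^2 + 1/(t+1/b)^2 < b ^ 2 := by
    rw [← hb3]
    have hden : b^3 + 1/b = (b^4 + 1)/b := by field_simp
    rw [hden]
    have hb41 : (0:ℝ) < b^4 + 1 := by positivity
    rw [div_pow, one_div_div]
    have h5 : b^2 < (b^2 - (b^3)^2) * (b^4+1)^2 := by
      nlinarith [hb4, pow_pos hb 4, pow_pos hb 2, mul_pos (pow_pos hb 2) (pow_pos hb 4),
        mul_pos (mul_pos (pow_pos hb 2) (pow_pos hb 4)) (pow_pos hb 4)]
    have h6 : b^2/(b^4+1)^2 < b^2 - (b^3)^2 := (div_lt_iff₀ (by positivity)).mpr h5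
    linarith
  have hEabs : ‖Complex.exp ((π / 4 : ℝ) * Complex.I)‖ = 1 := by
    rw [Complex.norm_exp]; simp
  have habsz : ‖z‖ = 1 / b := by
    simp only [z, norm_mul, hEabs, ha, Complex.norm_real, Real.norm_eq_abs, mul_one]
    rw [abs_of_pos (by positivity)]
  have h1 : ‖q + 1/(p+z)‖ ^ 2 < t ^ ((2:ℝ)/3) := by
    rw [habs2, h23]; exact hkey
  refine ⟨h1, ?_, ?_⟩
  · rw [habsz, h23, one_div, one_div, inv_pow, inv_inv]
  · have hwsq : 0 < ‖q + 1/(p+z)‖ ^ 2 := by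
      rw [habs2]; positivity
    have hwne : ‖q + 1/(p+z)‖ ≠ 0 := by
      intro h0; rw [h0] at hwsq; simp at hwsq
    have hwpos : 0 < ‖q + 1/(p+z)‖ :=
      lt_of_le_of_ne (norm_nonneg _) (Ne.symm hwne)
    have hwlt : ‖q + 1/(p+z)‖ < b := by
      have := h1
      rw [h23] at this
      exact lt_of_pow_lt_pow_left₀ 2 hb.le this
    rw [habsz, one_div, one_div]
    exact inv_strictAnti₀ hwpos hwlt
end

section
/- Suppose p, q, z are complex numbers with Re p > 0, Re q > 0, Re z > 0, and C > 0 satisfies C² ≥ 1/(4 · Re(q) · Re(1/p)). If |z − C| ≤ C then |1/(q + 1/(p+z)) − C| ≤ C. -/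
open Complex

theorem two_step_disk_lemma (p q z : ℂ)
    (hp : 0 < p.re) (hq : 0 < q.re) (hz : 0 < z.re)
    (C : ℝ) (hC : 0 < C)
    (hC2 : 1 / (4 * q.re * (1 / p).re) ≤ C ^ 2)
    (hzC : ‖z - (C : ℂ)‖ ≤ C) :
    ‖1 / (q + 1 / (p + z)) - (C : ℂ)‖ ≤ C := by
  have h2C : (0:ℝ) < 2 * C := by linarith
  have hpne : p ≠ 0 := fun h => by simp [h] at hp
  have hnp : 0 < Complex.normSq p := Complex.normSq_pos.2 hpne
  have hpz : 0 < (p + z).re := by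
    simp only [Complex.add_re]; linarith
  have hpzne : p + z ≠ 0 := fun h => by rw [h] at hpz; simp at hpz
  have hnpz : 0 < Complex.normSq (p + z) := Complex.normSq_pos.2 hpzne
  have hK : (0:ℝ) < 2 * C * p.re + Complex.normSq p := by positivity
  -- from hzC : normSq z ≤ 2 C z.re
  have hz2 : Complex.normSq z ≤ 2 * C * z.re := by
    have h1 : Complex.normSq (z - (C:ℂ)) ≤ C ^ 2 := by
      rw [← Complex.sq_norm]
      exact pow_le_pow_left₀ (norm_nonneg _) hzC 2
    simp only [Complex.normSq_apply, Complex.sub_re, Complex.sub_im,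
      Complex.ofReal_re, Complex.ofReal_im, sub_zero] at h1 ⊢
    nlinarith [h1]
  -- from hC2 : normSq p ≤ 4 C² q.re p.re
  have hq2 : Complex.normSq p ≤ 4 * C ^ 2 * q.re * p.re := by
    have hre : (1 / p).re = p.re / Complex.normSq p := by
      rw [one_div, Complex.inv_re]
    have hD : (0:ℝ) < 4 * q.re * (1 / p).re := by
      rw [hre]; positivity
    have h1 : 1 ≤ C ^ 2 * (4 * q.re * (1 / p).re) := (div_le_iff₀ hD).mp hC2
    rw [hre] at h1
    rw [div_eq_mul_inv] at h1
    have h2 := mul_le_mul_of_nonneg_right h1 hnp.le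
    rw [one_mul] at h2
    calc Complex.normSq p
        ≤ C ^ 2 * (4 * q.re * (p.re * (Complex.normSq p)⁻¹)) * Complex.normSq p := h2
      _ = 4 * C ^ 2 * q.re * p.re * ((Complex.normSq p)⁻¹ * Complex.normSq p) := by ring
      _ = 4 * C ^ 2 * q.re * p.re := by rw [inv_mul_cancel₀ hnp.ne', mul_one]
  -- Step A : p.re / (2C p.re + normSq p) ≤ Re(1/(p+z))
  have hA : p.re / (2 * C * p.re + Complex.normSq p) ≤ (p + z).re / Complex.normSq (p + z) := by
    rw [div_le_div_iff₀ hK hnpz]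
    simp only [Complex.normSq_apply, Complex.add_re, Complex.add_im]
    nlinarith [sq_nonneg (p.re * z.im - p.im * z.re),
      mul_nonneg (sq_nonneg p.re) (show (0:ℝ) ≤ 2 * C * z.re - (z.re * z.re + z.im * z.im) by
        simp only [Complex.normSq_apply] at hz2; linarith),
      mul_nonneg hp.le (show (0:ℝ) ≤ 2 * C * z.re - (z.re * z.re + z.im * z.im) by
        simp only [Complex.normSq_apply] at hz2; linarith),
      mul_pos hp hz, hz.le, hp.le]
  -- Step B : 1/(2C) ≤ q.re + p.re / (2C p.re + normSq p)
  have hB : 1 / (2 * C) ≤ q.re + p.re / (2 * C * p.re + Complex.normSq p) := by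
    rw [div_le_iff₀ h2C, add_mul, div_mul_eq_mul_div, ← sub_le_iff_le_add', le_div_iff₀ hK]
    nlinarith [hq2, mul_nonneg (mul_nonneg (mul_nonneg (by norm_num : (0:ℝ) ≤ 2) hC.le) hq.le)
      (Complex.normSq_nonneg p)]
  -- Hence Re W ≥ 1/(2C)
  set W := q + 1 / (p + z) with hWdef
  have hWre : 1 / (2 * C) ≤ W.re := by
    have hure : (1 / (p + z)).re = (p + z).re / Complex.normSq (p + z) := by
      rw [one_div, Complex.inv_re]
    rw [hWdef, Complex.add_re, hure]
    linarith
  have hWrepos : 0 < W.re := lt_of_lt_of_le (by positivity) hWre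
  have hWne : W ≠ 0 := fun h => by rw [h] at hWrepos; simp at hWrepos
  -- Final step: Re W ≥ 1/(2C) → |1/W - C| ≤ C
  have h1 : 1 ≤ W.re * (2 * C) := (div_le_iff₀ h2C).mp hWre
  have heq : 1 / W - (C:ℂ) = (1 - C * W) / W := by
    field_simp
  rw [heq, norm_div]
  rw [div_le_iff₀ (norm_pos_iff.mpr hWne)]
  have habs : ‖1 - (C:ℂ) * W‖ ^ 2 ≤ (C * ‖W‖) ^ 2 := by
    rw [Complex.sq_norm, mul_pow, Complex.sq_norm]
    simp only [Complex.normSq_apply, Complex.sub_re, Complex.sub_im, Complex.mul_re,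
      Complex.mul_im, Complex.one_re, Complex.one_im, Complex.ofReal_re, Complex.ofReal_im]
    nlinarith [h1, sq_nonneg W.im, sq_nonneg C]
  have h0 : (0:ℝ) ≤ C * ‖W‖ := by positivity
  nlinarith [norm_nonneg (1 - (C:ℂ) * W), habs, h0]
end

section
/- Let p_1,…,p_n, q_1,…,q_n, z be complex numbers with positive real part, and let C > 0 satisfy C² ≥ (1/4) · sup_{1≤k≤n} 1/(Re(q_k) · Re(1/p_k)). If |z − C| ≤ C then the finite continued fraction 1/(q_1 + 1/(p_1 + 1/(q_2 + ··· + 1/(q_n + 1/(p_n + z))···))) lies in the closed disk of radius C centered at C. -/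
lemma disk_iff (C : ℝ) (hC : 0 < C) (w : ℂ) :
    ‖w - (C : ℂ)‖ ≤ C ↔ Complex.normSq w ≤ 2 * C * w.re := by
  have h1 : ‖w - (C:ℂ)‖^2 = Complex.normSq (w - (C:ℂ)) := Complex.sq_norm _
  have h2 : Complex.normSq (w - (C:ℂ)) = Complex.normSq w - 2*C*w.re + C^2 := by
    simp [Complex.normSq_apply, Complex.sub_re, Complex.sub_im]
    ring
  constructor
  · intro h
    have := pow_le_pow_left₀ (norm_nonneg _) h 2
    rw [h1, h2] at this; linarith
  · intro h
    have h3 : ‖w - (C:ℂ)‖^2 ≤ C^2 := by rw [h1, h2]; linarith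
    exact le_of_pow_le_pow_left₀ two_ne_zero hC.le h3

lemma key_real (a b x y C : ℝ) (ha : 0 < a) (hC : 0 < C) (hw : x^2 + y^2 ≤ 2*C*x) :
    0 ≤ 2*C*a^2 + (b^2 - a^2)*x - 2*a*b*y := by
  have hM : 0 < C*(a^2+b^2) := by positivity
  have hL2 : ((b^2-a^2)*(x-C) - 2*a*b*y)^2 ≤ (C*(a^2+b^2))^2 := by
    nlinarith [sq_nonneg ((b^2-a^2)*y + 2*a*b*(x-C)), sq_nonneg (a^2+b^2)]
  nlinarith [sq_nonneg ((b^2-a^2)*(x-C) - 2*a*b*y + C*(a^2+b^2))]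

lemma key2 (a b x y C nw m : ℝ) (ha : 0 < a) (hC : 0 < C)
    (hm : m = a^2 + b^2) (hnw : nw = x^2 + y^2) (hw : nw ≤ 2*C*x) :
    a * (m + 2*(a*x + b*y) + nw) ≤ (a + x) * (m + 2*C*a) := by
  subst hm hnw
  nlinarith [key_real a b x y C ha hC (by linarith),
    mul_le_mul_of_nonneg_left hw ha.le]

lemma step (C : ℝ) (hC : 0 < C) (p q w : ℂ) (hp : 0 < p.re) (hq : 0 < q.re)
    (hpq : 1 / 4 * (1 / (q.re * (1 / p).re)) ≤ C ^ 2)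
    (hw : ‖w - (C : ℂ)‖ ≤ C) :
    ‖1 / (q + 1 / (p + w)) - (C : ℂ)‖ ≤ C := by
  rw [disk_iff C hC] at hw ⊢
  have hwre : 0 ≤ w.re := by nlinarith [Complex.normSq_nonneg w]
  have hp0 : p ≠ 0 := fun h => by simp [h] at hp
  have hmp : 0 < Complex.normSq p := Complex.normSq_pos.mpr hp0
  have hζre : 0 < (p + w).re := by simp [Complex.add_re]; linarith
  have hζ0 : p + w ≠ 0 := fun h => by rw [h] at hζre; simp at hζre
  have hnζ : 0 < Complex.normSq (p + w) := Complex.normSq_pos.mpr hζ0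
  have hGre : (1 / (p + w)).re = (p + w).re / Complex.normSq (p + w) := by
    rw [one_div, Complex.inv_re]
  -- key lower bound on Re(1/(p+w))
  have hkey : p.re / (Complex.normSq p + 2 * C * p.re) ≤ (1 / (p + w)).re := by
    rw [hGre, div_le_div_iff₀ (by positivity) hnζ]
    have h1 : Complex.normSq (p + w)
        = (p.re^2 + p.im^2) + 2*(p.re*w.re + p.im*w.im) + (w.re^2 + w.im^2) := by
      simp [Complex.normSq_apply, Complex.add_re, Complex.add_im]; ring
    have h1' : Complex.normSq p = p.re^2 + p.im^2 := by
      simp [Complex.normSq_apply]; ring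
    have hw' : w.re^2 + w.im^2 ≤ 2*C*w.re := by
      have h2' : Complex.normSq w = w.re^2 + w.im^2 := by
        simp [Complex.normSq_apply]; ring
      linarith [h2' ▸ hw]
    have := key2 p.re p.im w.re w.im C (w.re^2 + w.im^2) (p.re^2 + p.im^2)
      hp hC rfl rfl hw'
    rw [h1, h1', Complex.add_re]
    linarith
  -- condition on q.re : normSq p ≤ 4 C^2 q.re p.re
  have hpinvre : (1 / p).re = p.re / Complex.normSq p := by rw [one_div, Complex.inv_re]
  have hqre : Complex.normSq p ≤ 4 * C^2 * (q.re * p.re) := by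
    rw [hpinvre] at hpq
    have hX : 0 < q.re * (p.re / Complex.normSq p) := by positivity
    have h6 : (q.re * (p.re / Complex.normSq p))⁻¹ ≤ 4*C^2 := by
      rw [one_div, one_div] at hpq; linarith
    have h7 : 1 ≤ 4*C^2 * (q.re * (p.re / Complex.normSq p)) := by
      have h8 := mul_le_mul_of_nonneg_left h6 hX.le
      rw [mul_inv_cancel₀ (ne_of_gt hX)] at h8
      nlinarith
    have h9 : q.re * (p.re / Complex.normSq p) * Complex.normSq p = q.re * p.re := by
      field_simp
    nlinarith [mul_le_mul_of_nonneg_right h7 hmp.le]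
  -- Re(q + 1/(p+w)) ≥ 1/(2C)
  have hD : 1 / (2*C) ≤ (q + 1/(p+w)).re := by
    simp only [Complex.add_re]
    have h3 : Complex.normSq p / (4 * C^2 * p.re) ≤ q.re := by
      rw [div_le_iff₀ (by positivity)]; nlinarith
    have h4 : 1/(2*C) ≤ Complex.normSq p / (4 * C^2 * p.re)
        + p.re / (Complex.normSq p + 2 * C * p.re) := by
      rw [div_add_div _ _ (by positivity) (by positivity),
        div_le_div_iff₀ (by positivity) (by positivity)]
      nlinarith [sq_nonneg (Complex.normSq p), mul_pos hC hp, mul_pos hmp hp]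
    linarith
  have hDre : 0 < (q + 1/(p+w)).re := lt_of_lt_of_le (by positivity) hD
  have hD0 : q + 1/(p+w) ≠ 0 := fun h => by rw [h] at hDre; simp at hDre
  have hnD : 0 < Complex.normSq (q + 1/(p+w)) := Complex.normSq_pos.mpr hD0
  have hFre : (1 / (q + 1/(p+w))).re
      = (q + 1/(p+w)).re / Complex.normSq (q + 1/(p+w)) := by
    rw [one_div, Complex.inv_re]
  have hFns : Complex.normSq (1 / (q + 1/(p+w)))
      = 1 / Complex.normSq (q + 1/(p+w)) := by
    simp [Complex.normSq_div]
  rw [hFns, hFre]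
  rw [div_le_iff₀ (by positivity : (0:ℝ) < 2*C)] at hD
  have h10 : (1:ℝ) ≤ 2*C*(q + 1/(p+w)).re := by nlinarith
  rw [div_le_iff₀ hnD]
  have : 2*C*((q + 1/(p+w)).re / Complex.normSq (q + 1/(p+w))) * Complex.normSq (q + 1/(p+w))
      = 2*C*(q + 1/(p+w)).re := by
    rw [mul_assoc, div_mul_cancel₀ _ (ne_of_gt hnD)]
  rw [this]; exact h10

theorem value_region_shifted_circle (n : ℕ) (q p : ℕ → ℂ) (z : ℂ)
    (hq : ∀ k, 1 ≤ k → k ≤ n → 0 < (q k).re)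
    (hp : ∀ k, 1 ≤ k → k ≤ n → 0 < (p k).re)
    (hz : 0 < z.re)
    (C : ℝ) (hC : 0 < C)
    (hC2 : ∀ k, 1 ≤ k → k ≤ n → 1 / 4 * (1 / ((q k).re * (1 / p k).re)) ≤ C ^ 2)
    (hzC : ‖z - (C : ℂ)‖ ≤ C) :
    ‖contFrac n q p z n - (C : ℂ)‖ ≤ C := by
  suffices h : ∀ k, k ≤ n → ‖contFrac n q p z k - (C : ℂ)‖ ≤ C from h n le_rfl
  intro k
  induction k with
  | zero => intro _; exact hzC
  | succ m ih =>
    intro hm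
    have hmn : m ≤ n := le_of_lt (Nat.lt_of_succ_le hm)
    have h1 : 1 ≤ n - m := by omega
    have h2 : n - m ≤ n := Nat.sub_le n m
    exact step C hC (p (n - m)) (q (n - m)) (contFrac n q p z m)
      (hp _ h1 h2) (hq _ h1 h2) (hC2 _ h1 h2) (ih hmn)
end
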